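/- Let G be a finite group of order 4t+2 > 2 and φ : G → {±1} a normalized map (φ(1)=1), with coboundary ∂φ(g,h) = φ(g)φ(h)φ(gh). Then the row excess of M_{∂φ}, i.e., Σ_{g≠1}|Σ_{h∈G} ∂φ(g,h)|, is at least 8t+2. -/
import Mathlib


/-- the row excess of a coboundary matrix over a group of order
`4t + 2 > 2` is at least `8t + 2`. -/
theorem stmt_4 (t : ℕ) (ht : 1 ≤ t) (G : Type*) [Group G] [Fintype G] [DecidableEq G]
    (hG : Fintype.card G = 4 * t + 2)
    (φ : G → ℤ) (hval : ∀ g, φ g = 1 ∨ φ g = -1) (hnorm : φ 1 = 1) :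
    (8 * t + 2 : ℤ) ≤
      ∑ g ∈ Finset.univ.erase (1 : G), |∑ h : G, φ g * φ h * φ (g * h)| := by
  have hScard : (∑ h : G, φ h) - (Fintype.card G : ℤ) = ∑ h : G, (φ h - 1) := by
    rw [Finset.sum_sub_distrib]
    simp [Finset.card_univ]
  have hS2 : (2 : ℤ) ∣ ∑ h : G, φ h := by
    have h1 : (2 : ℤ) ∣ ∑ h : G, (φ h - 1) := by
      apply Finset.dvd_sum
      intro h _
      rcases hval h with hh | hh <;> simp [hh]
    rw [← hScard] at h1
    have : (2 : ℤ) ∣ (Fintype.card G : ℤ) := by rw [hG]; push_cast; omega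
    omega
  have key : ∀ g : G, (2 : ℤ) ≤ |∑ h : G, φ h * φ (g * h)| := by
    intro g
    have hshift : ∑ h : G, φ (g * h) = ∑ h : G, φ h :=
      Fintype.sum_equiv (Equiv.mulLeft g) (fun h => φ (g * h)) φ (fun h => rfl)
    have hexp : ∑ h : G, (φ h - 1) * (φ (g * h) - 1)
        = (∑ h : G, φ h * φ (g * h)) - 2 * (∑ h : G, φ h) + (Fintype.card G : ℤ) := by
      have : ∑ h : G, (φ h - 1) * (φ (g * h) - 1)
          = ∑ h : G, (φ h * φ (g * h) - φ h - φ (g * h) + 1) := by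
        apply Finset.sum_congr rfl; intros; ring
      rw [this]
      rw [Finset.sum_add_distrib, Finset.sum_sub_distrib, Finset.sum_sub_distrib, hshift]
      simp [Finset.card_univ]
      ring
    have h4 : (4 : ℤ) ∣ ∑ h : G, (φ h - 1) * (φ (g * h) - 1) := by
      apply Finset.dvd_sum
      intro h _
      rcases hval h with h1 | h1 <;> rcases hval (g * h) with h2 | h2 <;> simp [h1, h2]
    rw [hexp] at h4
    have hn : (Fintype.card G : ℤ) = 4 * t + 2 := by rw [hG]; push_cast; ring
    rw [hn] at h4
    -- conclude f(g) ≡ 2 mod 4, hence |f(g)| ≥ 2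
    by_contra hc
    push_neg at hc
    rw [abs_lt] at hc
    omega
  have hmem : ∀ g ∈ Finset.univ.erase (1 : G),
      (2 : ℤ) ≤ |∑ h : G, φ g * φ h * φ (g * h)| := by
    intro g _
    have : ∑ h : G, φ g * φ h * φ (g * h) = φ g * ∑ h : G, φ h * φ (g * h) := by
      rw [Finset.mul_sum]
      apply Finset.sum_congr rfl; intros; ring
    rw [this, abs_mul]
    rcases hval g with h1 | h1 <;> simp [h1] <;> exact key g
  calc (8 * t + 2 : ℤ) = (Finset.univ.erase (1 : G)).card * 2 := by
        rw [Finset.card_erase_of_mem (Finset.mem_univ 1), Finset.card_univ, hG]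
        push_cast; ring
    _ = ∑ _g ∈ Finset.univ.erase (1 : G), (2 : ℤ) := by rw [Finset.sum_const, nsmul_eq_mul]
    _ ≤ _ := Finset.sum_le_sum hmem
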